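/- arXiv:1207.3309 — 2 statements merged into one kernel-verified Lean document; each statement's English description precedes it below -/
import Mathlib

section
/- Let V = V₀ ⊕ V₁ be a Z/2-graded vector space and μ a partition. The i-th graded piece (in the Z-grading by V₁-degree) of the Schur module of the superspace, S_μ(V₀ ⊕ V₁), decomposes as a GL(V₀) × GL(V₁)-representation as ⊕_{ν ⊆ μ, |ν| = i} S_{μ/ν}(V₀) ⊗ S_{ν†}(V₁), where ν† is the transpose partition. Equivalently, on the level of characters: the super Schur function satisfies s_μ(x/y) = Σ_{ν ⊆ μ} s_{μ/ν}(x) s_{ν†}(y). -/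
open scoped Classical

/-- Whether `T : Fin b → Fin a → Fin N` is a semistandard Young tableau of skew shape
`μ/ν` (inside the `b × a` rectangle), normalized to be `0` outside the shape:
rows weakly increase, columns strictly increase. -/
def IsSkewSSYT (b a N : ℕ) (μ ν : Fin b → ℕ) (T : Fin b → Fin a → Fin N) : Prop :=
  (∀ (i : Fin b) (j₁ j₂ : Fin a), ν i ≤ (j₁ : ℕ) → (j₁ : ℕ) ≤ (j₂ : ℕ) →
      (j₂ : ℕ) < μ i → T i j₁ ≤ T i j₂) ∧
  (∀ (i₁ i₂ : Fin b) (j : Fin a), i₁ < i₂ → ν i₁ ≤ (j : ℕ) → (j : ℕ) < μ i₂ →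
      T i₁ j < T i₂ j) ∧
  (∀ (i : Fin b) (j : Fin a), ((j : ℕ) < ν i ∨ μ i ≤ (j : ℕ)) → (T i j : ℕ) = 0)

/-- The skew Schur polynomial `s_{μ/ν}(x₁,…,x_N)`. -/
noncomputable def skewSchur (b a N : ℕ) (μ ν : Fin b → ℕ) : MvPolynomial (Fin N) ℚ :=
  ∑ T : Fin b → Fin a → Fin N,
    if IsSkewSSYT b a N μ ν T then
      ∏ i : Fin b, ∏ j ∈ Finset.univ.filter (fun j : Fin a => ν i ≤ (j : ℕ) ∧ (j : ℕ) < μ i),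
        MvPolynomial.X (T i j)
    else 0

/-- Rank of a letter in the super alphabet: the odd letters `y₁ < ⋯ < y_q` come first,
then the even letters `x₁ < ⋯ < x_p`. -/
def superRank (p q : ℕ) : Fin p ⊕ Fin q → ℕ :=
  Sum.elim (fun i => q + (i : ℕ)) (fun j => (j : ℕ))

/-- Whether `T` is a super semistandard tableau of shape `μ`: entries weakly increase
along rows with repeats allowed only for even (`x`) letters, and strictly increase
along columns with repeats allowed only for odd (`y`) letters. Normalized to the
fixed value `x₀` outside the shape. -/
def IsSuperSSYT (b a p q : ℕ) (hp : 0 < p) (μ : Fin b → ℕ)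
    (T : Fin b → Fin a → (Fin p ⊕ Fin q)) : Prop :=
  (∀ (i : Fin b) (j₁ j₂ : Fin a), (j₁ : ℕ) < (j₂ : ℕ) → (j₂ : ℕ) < μ i →
      (superRank p q (T i j₁) < superRank p q (T i j₂) ∨
        (T i j₁ = T i j₂ ∧ (T i j₁).isLeft = true))) ∧
  (∀ (i₁ i₂ : Fin b) (j : Fin a), i₁ < i₂ → (j : ℕ) < μ i₂ →
      (superRank p q (T i₁ j) < superRank p q (T i₂ j) ∨
        (T i₁ j = T i₂ j ∧ (T i₁ j).isRight = true))) ∧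
  (∀ (i : Fin b) (j : Fin a), μ i ≤ (j : ℕ) → T i j = Sum.inl ⟨0, hp⟩)

/-- The super Schur polynomial `s_μ(x/y)`: the generating function of super
semistandard tableaux of shape `μ` in even variables `x₁,…,x_p` and odd variables
`y₁,…,y_q`. -/
noncomputable def superSchur (b a p q : ℕ) (hp : 0 < p) (μ : Fin b → ℕ) :
    MvPolynomial (Fin p ⊕ Fin q) ℚ :=
  ∑ T : Fin b → Fin a → (Fin p ⊕ Fin q),
    if IsSuperSSYT b a p q hp μ T then
      ∏ i : Fin b, ∏ j ∈ Finset.univ.filter (fun j : Fin a => (j : ℕ) < μ i),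
        MvPolynomial.X (T i j)
    else 0

/-- The transpose of `ν : Fin b → ℕ` as a partition with at most `a` parts. -/
def transposeP (b a : ℕ) (ν : Fin b → ℕ) : Fin a → ℕ :=
  fun j => (Finset.univ.filter fun i : Fin b => (j : ℕ) < ν i).card

open Finset

lemma prefixCard {n : ℕ} (P : Fin n → Prop) [DecidablePred P]
    (h : ∀ j₁ j₂ : Fin n, j₁ ≤ j₂ → P j₂ → P j₁) (j : Fin n) :
    P j ↔ (j : ℕ) < (univ.filter P).card := by
  constructor
  · intro hj
    have hsub : (univ.filter (fun k : Fin n => k ≤ j)) ⊆ univ.filter P := by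
      intro k hk
      simp only [mem_filter, mem_univ, true_and] at *
      exact h k j hk hj
    have hle := Finset.card_le_card hsub
    have hc : (univ.filter (fun k : Fin n => k ≤ j)).card = j + 1 := by
      rw [show (univ.filter fun k : Fin n => k ≤ j) = Finset.Iic j from by ext k; simp]
      simp [Fin.card_Iic]
    omega
  · intro hj
    by_contra hP
    have hsub : univ.filter P ⊆ univ.filter (fun k : Fin n => k < j) := by
      intro k hk
      simp only [mem_filter, mem_univ, true_and] at *
      rcases lt_or_ge k j with h' | h'
      · exact h'
      · exact absurd (h j k h' hk) hP
    have hle := Finset.card_le_card hsub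
    have hc : (univ.filter (fun k : Fin n => k < j)).card = j := by
      rw [show (univ.filter fun k : Fin n => k < j) = Finset.Iio j from by ext k; simp]
      simp [Fin.card_Iio]
    omega

lemma cardFilterLt (n c : ℕ) (h : c ≤ n) :
    ((univ.filter (fun j : Fin n => (j : ℕ) < c)).card) = c := by
  have he : (univ.filter (fun j : Fin n => (j : ℕ) < c)) =
      (univ : Finset (Fin c)).map (Fin.castLEEmb h) := by
    ext x
    simp only [mem_filter, mem_univ, true_and, Finset.mem_map]
    constructor
    · intro hx; exact ⟨⟨x, hx⟩, by simp⟩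
    · rintro ⟨k, -, rfl⟩; simp
  rw [he]; simp

lemma transpose_iff {b a : ℕ} (ν : Fin b → ℕ) (hν : Antitone ν) (i : Fin b) (j : Fin a) :
    (i : ℕ) < transposeP b a ν j ↔ (j : ℕ) < ν i := by
  have := prefixCard (fun i : Fin b => (j : ℕ) < ν i)
    (fun i₁ i₂ h12 h2 => lt_of_lt_of_le h2 (hν h12)) i
  exact this.symm

-- the maps
def toNu (b a p q : ℕ) (T : Fin b → Fin a → Fin p ⊕ Fin q) (i : Fin b) : Fin (a + 1) :=
  ⟨(univ.filter fun j : Fin a => (T i j).isRight).card,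
    Nat.lt_succ_of_le (le_trans (Finset.card_filter_le _ _) (by simp))⟩

def toX (b a p q : ℕ) (hp : 0 < p) (T : Fin b → Fin a → Fin p ⊕ Fin q)
    (i : Fin b) (j : Fin a) : Fin p :=
  Sum.elim id (fun _ => ⟨0, hp⟩) (T i j)

def toY (b a p q : ℕ) (hq : 0 < q) (T : Fin b → Fin a → Fin p ⊕ Fin q)
    (j : Fin a) (i : Fin b) : Fin q :=
  Sum.elim (fun _ => ⟨0, hq⟩) id (T i j)

def toT (b a p q : ℕ) (hp : 0 < p) (ν : Fin b → Fin (a + 1))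
    (Tx : Fin b → Fin a → Fin p) (Ty : Fin a → Fin b → Fin q)
    (i : Fin b) (j : Fin a) : Fin p ⊕ Fin q :=
  if (j : ℕ) < (ν i : ℕ) then Sum.inr (Ty j i) else Sum.inl (Tx i j)

section Forward
variable {b a p q : ℕ} {hp : 0 < p} {hq : 0 < q} {μ : Fin b → ℕ}
  {T : Fin b → Fin a → Fin p ⊕ Fin q}

lemma isRight_iff_rank {s : Fin p ⊕ Fin q} : s.isRight = true ↔ superRank p q s < q := by
  cases s <;> simp [superRank] <;> omega

lemma odd_iff (hT : IsSuperSSYT b a p q hp μ T) (i : Fin b) (j : Fin a) :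
    (T i j).isRight = true ↔ (j : ℕ) < (toNu b a p q T i : ℕ) := by
  refine prefixCard (fun j => (T i j).isRight = true) ?_ j
  intro j₁ j₂ h12 h2
  rcases eq_or_lt_of_le h12 with h | h
  · rwa [h]
  · have hj2 : (j₂ : ℕ) < μ i := by
      by_contra hc
      rw [hT.2.2 i j₂ (le_of_not_gt hc)] at h2; simp at h2
    rcases hT.1 i j₁ j₂ (by exact_mod_cast h) hj2 with hr | ⟨he, hl⟩
    · rw [isRight_iff_rank] at h2 ⊢; omega
    · rw [he]; exact h2

lemma nu_le (hT : IsSuperSSYT b a p q hp μ T) (hμa : ∀ i, μ i ≤ a) (i : Fin b) :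
    (toNu b a p q T i : ℕ) ≤ μ i := by
  have hsub : (univ.filter fun j : Fin a => (T i j).isRight) ⊆
      (univ.filter fun j : Fin a => (j : ℕ) < μ i) := by
    intro j hj
    simp only [mem_filter, mem_univ, true_and] at *
    by_contra hc
    rw [hT.2.2 i j (le_of_not_gt hc)] at hj; simp at hj
  calc (toNu b a p q T i : ℕ) ≤ _ := Finset.card_le_card hsub
    _ = μ i := cardFilterLt a (μ i) (hμa i)

lemma nu_antitone (hT : IsSuperSSYT b a p q hp μ T) :
    Antitone fun i => ((toNu b a p q T i : ℕ)) := by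
  intro i₁ i₂ h12
  rcases eq_or_lt_of_le h12 with h | h
  · rw [h]
  · show (univ.filter fun j : Fin a => (T i₂ j).isRight).card ≤ (univ.filter fun j : Fin a => (T i₁ j).isRight).card
    apply Finset.card_le_card
    intro j hj
    simp only [mem_filter, mem_univ, true_and] at *
    have hj2 : (j : ℕ) < μ i₂ := by
      by_contra hc
      rw [hT.2.2 i₂ j (le_of_not_gt hc)] at hj; simp at hj
    rcases hT.2.1 i₁ i₂ j h hj2 with hr | ⟨he, _⟩
    · rw [isRight_iff_rank] at hj ⊢; omega
    · rw [he]; exact hj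
end Forward

section Forward2
variable {b a p q : ℕ} {hp : 0 < p} {hq : 0 < q} {μ : Fin b → ℕ}
  {T : Fin b → Fin a → Fin p ⊕ Fin q}

lemma even_get (hT : IsSuperSSYT b a p q hp μ T) {i : Fin b} {j : Fin a}
    (h : ¬ (j : ℕ) < (toNu b a p q T i : ℕ)) :
    T i j = Sum.inl (toX b a p q hp T i j) := by
  have := odd_iff hT i j
  cases hs : T i j with
  | inl x => simp [toX, hs]
  | inr y => rw [hs] at this; simp at this; omega

lemma odd_get (hT : IsSuperSSYT b a p q hp μ T) {i : Fin b} {j : Fin a}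
    (h : (j : ℕ) < (toNu b a p q T i : ℕ)) :
    T i j = Sum.inr (toY b a p q hq T j i) := by
  have := (odd_iff hT i j).2 h
  cases hs : T i j with
  | inl x => rw [hs] at this; simp at this
  | inr y => simp [toY, hs]

lemma px_forward (hT : IsSuperSSYT b a p q hp μ T) :
    IsSkewSSYT b a p μ (fun i => (toNu b a p q T i : ℕ)) (toX b a p q hp T) := by
  refine ⟨?_, ?_, ?_⟩
  · intro i j₁ j₂ hν h12 h2
    have hν' : (toNu b a p q T i : ℕ) ≤ (j₁ : ℕ) := hν
    rcases eq_or_lt_of_le h12 with h | h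
    · rw [show j₁ = j₂ from Fin.ext h]
    · have e1 := even_get (μ := μ) hT (i := i) (j := j₁) (by omega)
      have e2 := even_get (μ := μ) hT (i := i) (j := j₂) (by omega)
      rcases hT.1 i j₁ j₂ h h2 with hr | ⟨he, _⟩
      · rw [e1, e2] at hr; simp [superRank] at hr
        exact le_of_lt (by exact_mod_cast hr)
      · rw [e1, e2] at he; simp at he; rw [he]
  · intro i₁ i₂ j h12 hν h2
    have hν' : (toNu b a p q T i₁ : ℕ) ≤ (j : ℕ) := hν
    have hanti : (toNu b a p q T i₂ : ℕ) ≤ (toNu b a p q T i₁ : ℕ) :=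
      nu_antitone hT (le_of_lt h12)
    have e1 := even_get (μ := μ) hT (i := i₁) (j := j) (by omega)
    have e2 := even_get (μ := μ) hT (i := i₂) (j := j) (by omega)
    rcases hT.2.1 i₁ i₂ j h12 h2 with hr | ⟨he, hright⟩
    · rw [e1, e2] at hr; simp [superRank] at hr
      exact by exact_mod_cast hr
    · rw [e1] at hright; simp at hright
  · intro i j hj
    rcases hj with hj | hj
    · have hj' : (j : ℕ) < (toNu b a p q T i : ℕ) := hj
      have hr := (odd_iff hT i j).2 hj'
      cases hs : T i j with
      | inl x => rw [hs] at hr; simp at hr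
      | inr y => simp [toX, hs]
    · have := hT.2.2 i j hj
      simp [toX, this]

lemma py_forward (hT : IsSuperSSYT b a p q hp μ T) (hμa : ∀ i, μ i ≤ a) :
    IsSkewSSYT a b q (transposeP b a fun i => (toNu b a p q T i : ℕ)) (fun _ => 0)
      (toY b a p q hq T) := by
  have hanti : Antitone fun i => ((toNu b a p q T i : ℕ)) := nu_antitone hT
  refine ⟨?_, ?_, ?_⟩
  · intro j i₁ i₂ _ h12 h2
    have h2' : (j : ℕ) < (toNu b a p q T i₂ : ℕ) :=
      (transpose_iff _ hanti i₂ j).1 h2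
    rcases eq_or_lt_of_le h12 with h | h
    · rw [show i₁ = i₂ from Fin.ext h]
    · have h1 : (j : ℕ) < (toNu b a p q T i₁ : ℕ) :=
        lt_of_lt_of_le h2' (hanti (le_of_lt (show i₁ < i₂ from by exact_mod_cast h)))
      have o1 := odd_get (hq := hq) hT h1
      have o2 := odd_get (hq := hq) hT h2'
      have hμ2 : (j : ℕ) < μ i₂ := lt_of_lt_of_le h2' (nu_le hT hμa i₂)
      rcases hT.2.1 i₁ i₂ j (by exact_mod_cast h) hμ2 with hr | ⟨he, _⟩
      · rw [o1, o2] at hr; simp [superRank] at hr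
        exact le_of_lt (by exact_mod_cast hr)
      · rw [o1, o2] at he; simp at he; rw [he]
  · intro j₁ j₂ i h12 _ h2
    have h2' : (j₂ : ℕ) < (toNu b a p q T i : ℕ) :=
      (transpose_iff _ hanti i j₂).1 h2
    have h1 : (j₁ : ℕ) < (toNu b a p q T i : ℕ) :=
      lt_of_le_of_lt (le_of_lt (show (j₁ : ℕ) < (j₂ : ℕ) from by exact_mod_cast h12)) h2'
    have o1 := odd_get (hq := hq) hT h1
    have o2 := odd_get (hq := hq) hT h2'
    have hμ2 : (j₂ : ℕ) < μ i := lt_of_lt_of_le h2' (nu_le hT hμa i)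
    rcases hT.1 i j₁ j₂ (by exact_mod_cast h12) hμ2 with hr | ⟨he, hleft⟩
    · rw [o1, o2] at hr; simp [superRank] at hr
      exact by exact_mod_cast hr
    · rw [o1] at hleft; simp at hleft
  · intro j i hj
    rcases hj with hj | hj
    · simp at hj
    · have hno : ¬ (j : ℕ) < (toNu b a p q T i : ℕ) := by
        intro hlt
        exact absurd ((transpose_iff _ hanti i j).2 hlt) (not_lt.2 hj)
      have := even_get (μ := μ) hT hno
      simp [toY, this]

lemma toT_eq (hT : IsSuperSSYT b a p q hp μ T) :
    toT b a p q hp (toNu b a p q T) (toX b a p q hp T) (toY b a p q hq T) = T := by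
  funext i j
  unfold toT
  split_ifs with h
  · exact (odd_get hT h).symm
  · exact (even_get hT h).symm

end Forward2

section Backward
variable {b a p q : ℕ} {hp : 0 < p} {hq : 0 < q} {μ : Fin b → ℕ} {ν : Fin b → Fin (a + 1)}
  {Tx : Fin b → Fin a → Fin p} {Ty : Fin a → Fin b → Fin q}

lemma backward (hν : Antitone fun i => ((ν i : ℕ))) (hνμ : ∀ i, (ν i : ℕ) ≤ μ i)
    (hx : IsSkewSSYT b a p μ (fun i => (ν i : ℕ)) Tx)
    (hy : IsSkewSSYT a b q (transposeP b a fun i => (ν i : ℕ)) (fun _ => 0) Ty) :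
    IsSuperSSYT b a p q hp μ (toT b a p q hp ν Tx Ty) := by
  refine ⟨?_, ?_, ?_⟩
  · intro i j₁ j₂ h12 h2
    by_cases c2 : (j₂ : ℕ) < (ν i : ℕ)
    · have c1 : (j₁ : ℕ) < (ν i : ℕ) := by omega
      have hcol := hy.2.1 j₁ j₂ i (show j₁ < j₂ from by exact_mod_cast h12)
        (Nat.zero_le _) ((transpose_iff _ hν i j₂).2 c2)
      left
      simp only [toT, if_pos c1, if_pos c2, superRank, Sum.elim_inr]
      exact_mod_cast hcol
    · by_cases c1 : (j₁ : ℕ) < (ν i : ℕ)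
      · left
        simp only [toT, if_pos c1, if_neg c2, superRank, Sum.elim_inr, Sum.elim_inl]
        have := (Ty j₁ i).isLt
        omega
      · have hrow := hx.1 i j₁ j₂ (not_lt.1 c1) (le_of_lt h12) h2
        rcases eq_or_lt_of_le hrow with h | h
        · right
          constructor
          · simp only [toT, if_neg c1, if_neg c2]
            exact congrArg Sum.inl h
          · simp [toT, if_neg c1]
        · left
          simp only [toT, if_neg c1, if_neg c2, superRank, Sum.elim_inl]
          have : (Tx i j₁ : ℕ) < (Tx i j₂ : ℕ) := h
          omega
  · intro i₁ i₂ j h12 h2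
    by_cases c2 : (j : ℕ) < (ν i₂ : ℕ)
    · have c1 : (j : ℕ) < (ν i₁ : ℕ) := lt_of_lt_of_le c2 (hν (le_of_lt h12))
      have hrow := hy.1 j i₁ i₂ (Nat.zero_le _)
        (le_of_lt (show (i₁ : ℕ) < (i₂ : ℕ) from h12))
        ((transpose_iff _ hν i₂ j).2 c2)
      rcases eq_or_lt_of_le hrow with h | h
      · right
        constructor
        · simp only [toT, if_pos c1, if_pos c2]
          exact congrArg Sum.inr h
        · simp [toT, if_pos c1]
      · left
        simp only [toT, if_pos c1, if_pos c2, superRank, Sum.elim_inr]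
        exact_mod_cast h
    · by_cases c1 : (j : ℕ) < (ν i₁ : ℕ)
      · left
        simp only [toT, if_pos c1, if_neg c2, superRank, Sum.elim_inr, Sum.elim_inl]
        have := (Ty j i₁).isLt
        omega
      · have hcol := hx.2.1 i₁ i₂ j h12 (not_lt.1 c1) h2
        left
        simp only [toT, if_neg c1, if_neg c2, superRank, Sum.elim_inl]
        have : (Tx i₁ j : ℕ) < (Tx i₂ j : ℕ) := hcol
        omega
  · intro i j hj
    have c : ¬ (j : ℕ) < (ν i : ℕ) := by have := hνμ i; omega
    have h0 : (Tx i j : ℕ) = 0 := hx.2.2 i j (Or.inr hj)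
    simp only [toT, if_neg c]
    exact congrArg Sum.inl (Fin.ext h0)

lemma toNu_toT : toNu b a p q (toT b a p q hp ν Tx Ty) = ν := by
  funext i
  apply Fin.ext
  show (univ.filter fun j : Fin a => (toT b a p q hp ν Tx Ty i j).isRight).card = (ν i : ℕ)
  have he : (univ.filter fun j : Fin a => (toT b a p q hp ν Tx Ty i j).isRight) =
      univ.filter fun j : Fin a => (j : ℕ) < (ν i : ℕ) := by
    ext j
    by_cases h : (j : ℕ) < (ν i : ℕ) <;> simp only [Finset.mem_filter, Finset.mem_univ, true_and] <;> simp [toT, h]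
  rw [he, cardFilterLt a _ (by have := (ν i).isLt; omega)]

lemma toX_toT (hx : IsSkewSSYT b a p μ (fun i => (ν i : ℕ)) Tx) :
    toX b a p q hp (toT b a p q hp ν Tx Ty) = Tx := by
  funext i j
  by_cases h : (j : ℕ) < (ν i : ℕ)
  · have h0 : (Tx i j : ℕ) = 0 := hx.2.2 i j (Or.inl h)
    simp only [toX, toT, if_pos h, Sum.elim_inr]
    exact (Fin.ext h0).symm
  · simp [toX, toT, h]

lemma toY_toT (hν : Antitone fun i => ((ν i : ℕ)))
    (hy : IsSkewSSYT a b q (transposeP b a fun i => (ν i : ℕ)) (fun _ => 0) Ty) :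
    toY b a p q hq (toT b a p q hp ν Tx Ty) = Ty := by
  funext j i
  by_cases h : (j : ℕ) < (ν i : ℕ)
  · simp [toY, toT, h]
  · have hge : transposeP b a (fun i => (ν i : ℕ)) j ≤ (i : ℕ) := by
      by_contra hc
      exact h ((transpose_iff _ hν i j).1 (not_le.1 hc))
    have h0 : (Ty j i : ℕ) = 0 := hy.2.2 j i (Or.inr hge)
    simp only [toY, toT, if_neg h, Sum.elim_inl]
    exact (Fin.ext h0).symm

end Backward

lemma weight {b a p q : ℕ} (hp : 0 < p) {μ : Fin b → ℕ} (ν : Fin b → Fin (a + 1))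
    (Tx : Fin b → Fin a → Fin p) (Ty : Fin a → Fin b → Fin q)
    (hν : Antitone fun i => ((ν i : ℕ))) (hνμ : ∀ i, (ν i : ℕ) ≤ μ i) :
    (∏ i : Fin b, ∏ j ∈ univ.filter (fun j : Fin a => (j : ℕ) < μ i),
        (MvPolynomial.X (toT b a p q hp ν Tx Ty i j) : MvPolynomial (Fin p ⊕ Fin q) ℚ))
    = (∏ i : Fin b, ∏ j ∈ univ.filter (fun j : Fin a => (ν i : ℕ) ≤ (j : ℕ) ∧ (j : ℕ) < μ i),
          MvPolynomial.X (Sum.inl (Tx i j)))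
      * (∏ j : Fin a, ∏ i ∈ univ.filter (fun i : Fin b =>
            (0 : ℕ) ≤ (i : ℕ) ∧ (i : ℕ) < transposeP b a (fun i => (ν i : ℕ)) j),
          MvPolynomial.X (Sum.inr (Ty j i))) := by
  have step1 : (∏ i : Fin b, ∏ j ∈ univ.filter (fun j : Fin a => (j : ℕ) < μ i),
        (MvPolynomial.X (toT b a p q hp ν Tx Ty i j) : MvPolynomial (Fin p ⊕ Fin q) ℚ))
      = ∏ i : Fin b, ∏ j : Fin a,
          ((if (ν i : ℕ) ≤ (j : ℕ) ∧ (j : ℕ) < μ i then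
              MvPolynomial.X (Sum.inl (Tx i j)) else 1) *
           (if (j : ℕ) < (ν i : ℕ) then
              (MvPolynomial.X (Sum.inr (Ty j i)) : MvPolynomial (Fin p ⊕ Fin q) ℚ) else 1)) := by
    refine Finset.prod_congr rfl fun i _ => ?_
    rw [Finset.prod_filter]
    refine Finset.prod_congr rfl fun j _ => ?_
    by_cases c1 : (j : ℕ) < (ν i : ℕ)
    · have c2 : (j : ℕ) < μ i := lt_of_lt_of_le c1 (hνμ i)
      simp [toT, c1, c2, not_le.2 c1]
    · by_cases c2 : (j : ℕ) < μ i
      · simp [toT, c1, c2, not_lt.1 c1]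
      · simp [toT, c1, c2]
  rw [step1]
  simp only [Finset.prod_mul_distrib]
  congr 1
  · refine Finset.prod_congr rfl fun i _ => ?_
    rw [Finset.prod_filter]
  · rw [Finset.prod_comm]
    refine Finset.prod_congr rfl fun j _ => ?_
    rw [Finset.prod_filter]
    refine Finset.prod_congr rfl fun i _ => ?_
    have hiff : ((0 : ℕ) ≤ (i : ℕ) ∧ (i : ℕ) < transposeP b a (fun i => (ν i : ℕ)) j)
        ↔ (j : ℕ) < (ν i : ℕ) := by
      rw [transpose_iff _ hν]
      simp
    by_cases h : (j : ℕ) < (ν i : ℕ)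
    · rw [if_pos h, if_pos (hiff.2 h)]
    · rw [if_neg h, if_neg (fun hc => h (hiff.1 hc))]

/-- the super Schur function decomposes as
`s_μ(x/y) = Σ_{ν ⊆ μ} s_{μ/ν}(x) · s_{ν†}(y)`, the character identity of the
decomposition `S_μ(V₀ ⊕ V₁)ᵢ = ⊕_{ν ⊆ μ, |ν| = i} S_{μ/ν}(V₀) ⊗ S_{ν†}(V₁)`. -/
theorem superSchur_decomposition (b a p q : ℕ) (hp : 0 < p) (hq : 0 < q)
    (μ : Fin b → ℕ) (hμ : Antitone μ) (hμa : ∀ i, μ i ≤ a) :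
    superSchur b a p q hp μ
      = ∑ ν : (∀ _ : Fin b, Fin (a + 1)),
          if (Antitone fun i => ((ν i : ℕ))) ∧ (∀ i, (ν i : ℕ) ≤ μ i) then
            (MvPolynomial.rename (Sum.inl : Fin p → Fin p ⊕ Fin q)
                (skewSchur b a p μ (fun i => (ν i : ℕ)))) *
            (MvPolynomial.rename (Sum.inr : Fin q → Fin p ⊕ Fin q)
                (skewSchur a b q (transposeP b a (fun i => (ν i : ℕ))) (fun _ => 0)))
          else 0 := by
  classical
  have hrenl : ∀ ν' : Fin b → ℕ,
      MvPolynomial.rename (Sum.inl : Fin p → Fin p ⊕ Fin q) (skewSchur b a p μ ν')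
      = ∑ Tx : Fin b → Fin a → Fin p,
          if IsSkewSSYT b a p μ ν' Tx then
            ∏ i : Fin b, ∏ j ∈ Finset.univ.filter
                (fun j : Fin a => ν' i ≤ (j : ℕ) ∧ (j : ℕ) < μ i),
              MvPolynomial.X (Sum.inl (Tx i j)) else 0 := by
    intro ν'
    simp only [skewSchur, map_sum,
      apply_ite (MvPolynomial.rename (Sum.inl : Fin p → Fin p ⊕ Fin q)),
      map_prod, MvPolynomial.rename_X, map_zero]
  have hrenr : ∀ ν' : Fin b → ℕ,
      MvPolynomial.rename (Sum.inr : Fin q → Fin p ⊕ Fin q)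
          (skewSchur a b q (transposeP b a ν') (fun _ => 0))
      = ∑ Ty : Fin a → Fin b → Fin q,
          if IsSkewSSYT a b q (transposeP b a ν') (fun _ => 0) Ty then
            ∏ j : Fin a, ∏ i ∈ Finset.univ.filter
                (fun i : Fin b => (0 : ℕ) ≤ (i : ℕ) ∧ (i : ℕ) < transposeP b a ν' j),
              MvPolynomial.X (Sum.inr (Ty j i)) else 0 := by
    intro ν'
    simp only [skewSchur, map_sum,
      apply_ite (MvPolynomial.rename (Sum.inr : Fin q → Fin p ⊕ Fin q)),
      map_prod, MvPolynomial.rename_X, map_zero]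
  calc superSchur b a p q hp μ
      = ∑ T ∈ Finset.univ.filter (fun T => IsSuperSSYT b a p q hp μ T),
          ∏ i : Fin b, ∏ j ∈ Finset.univ.filter (fun j : Fin a => (j : ℕ) < μ i),
            MvPolynomial.X (T i j) := by
        rw [superSchur, Finset.sum_filter]
    _ = ∑ z ∈ Finset.univ.filter
          (fun z : (Fin b → Fin (a + 1)) × (Fin b → Fin a → Fin p) × (Fin a → Fin b → Fin q) =>
            ((Antitone fun i => ((z.1 i : ℕ))) ∧ ∀ i, (z.1 i : ℕ) ≤ μ i) ∧
            IsSkewSSYT b a p μ (fun i => (z.1 i : ℕ)) z.2.1 ∧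
            IsSkewSSYT a b q (transposeP b a fun i => (z.1 i : ℕ)) (fun _ => 0) z.2.2),
          (∏ i : Fin b, ∏ j ∈ Finset.univ.filter
              (fun j : Fin a => (z.1 i : ℕ) ≤ (j : ℕ) ∧ (j : ℕ) < μ i),
            MvPolynomial.X (Sum.inl (z.2.1 i j)))
          * (∏ j : Fin a, ∏ i ∈ Finset.univ.filter
              (fun i : Fin b => (0 : ℕ) ≤ (i : ℕ) ∧
                (i : ℕ) < transposeP b a (fun i => (z.1 i : ℕ)) j),
            MvPolynomial.X (Sum.inr (z.2.2 j i))) := by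
        refine Finset.sum_nbij'
          (fun T => (toNu b a p q T, toX b a p q hp T, toY b a p q hq T))
          (fun z => toT b a p q hp z.1 z.2.1 z.2.2) ?_ ?_ ?_ ?_ ?_
        · intro T hT
          simp only [Finset.mem_filter, Finset.mem_univ, true_and] at *
          exact ⟨⟨nu_antitone hT, nu_le hT hμa⟩, px_forward hT, py_forward hT hμa⟩
        · intro z hz
          simp only [Finset.mem_filter, Finset.mem_univ, true_and] at *
          exact backward hz.1.1 hz.1.2 hz.2.1 hz.2.2
        · intro T hT
          simp only [Finset.mem_filter, Finset.mem_univ, true_and] at hT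
          exact toT_eq hT
        · rintro ⟨ν', Tx, Ty⟩ hz
          simp only [Finset.mem_filter, Finset.mem_univ, true_and] at hz
          simp only [Prod.mk.injEq]
          exact ⟨toNu_toT, toX_toT hz.2.1, toY_toT hz.1.1 hz.2.2⟩
        · intro T hT
          simp only [Finset.mem_filter, Finset.mem_univ, true_and] at hT
          have hw := weight hp (toNu b a p q T) (toX b a p q hp T) (toY b a p q hq T)
            (nu_antitone hT) (nu_le hT hμa)
          rw [toT_eq hT] at hw
          exact hw
    _ = _ := by
        rw [Finset.sum_filter, Fintype.sum_prod_type]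
        refine Finset.sum_congr rfl fun ν' _ => ?_
        rw [Fintype.sum_prod_type, hrenl (fun i => ((ν' i : ℕ))), hrenr (fun i => ((ν' i : ℕ)))]
        by_cases hC : (Antitone fun i => ((ν' i : ℕ))) ∧ ∀ i, (ν' i : ℕ) ≤ μ i
        · rw [if_pos hC, Finset.sum_mul_sum]
          refine Finset.sum_congr rfl fun Tx _ => Finset.sum_congr rfl fun Ty _ => ?_
          by_cases h1 : IsSkewSSYT b a p μ (fun i => (ν' i : ℕ)) Tx <;>
            by_cases h2 : IsSkewSSYT a b q (transposeP b a fun i => (ν' i : ℕ)) (fun _ => 0) Ty <;>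
            simp [h1, h2, hC]
        · rw [if_neg hC]
          refine Finset.sum_eq_zero fun Tx _ => Finset.sum_eq_zero fun Ty _ => ?_
          rw [if_neg (by tauto)]
end

section
/- With P_{r,s}(α,β) = (s+α₁,…,s+α_s, s^r, β₁,…,β_{ℓ(β)}) and Q_{r,s}(α,β) = (s+β†₁,…,s+β†_s, s^r, α†₁,…,α†_{α₁}) for partitions α, β with ℓ(α) ≤ s and β₁ ≤ s: both P_{r,s}(α,β) and Q_{r,s}(α,β) are partitions, |P_{r,s}(α,β)| = |Q_{r,s}(α,β)| = s(s+r) + |α| + |β|, and the assignment (α,β) ↦ (P_{r,s}(α,β), Q_{r,s}(α,β)) is injective. -/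
/-- Transpose of a partition given as `α : Fin s → ℕ`. -/
def conjA (s : ℕ) (α : Fin s → ℕ) (j : ℕ) : ℕ :=
  (Finset.univ.filter fun i : Fin s => j < α i).card

/-- Transpose of a partition `β : ℕ → ℕ` supported in `[0, L)`. -/
def conjB (L : ℕ) (β : ℕ → ℕ) (k : ℕ) : ℕ :=
  ((Finset.range L).filter fun j => k < β j).card

/-- `P_{r,s}(α,β) = (s+α₁,…,s+α_s, s^r, β₁, β₂, …)` as a function `ℕ → ℕ`. -/
def Ppart (r s : ℕ) (α : Fin s → ℕ) (β : ℕ → ℕ) (k : ℕ) : ℕ :=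
  if h : k < s then s + α ⟨k, h⟩
  else if k < s + r then s
  else β (k - (s + r))

/-- `Q_{r,s}(α,β) = (s+β†₁,…,s+β†_s, s^r, α†₁, α†₂, …)` as a function `ℕ → ℕ`. -/
def Qpart (r s L : ℕ) (α : Fin s → ℕ) (β : ℕ → ℕ) (k : ℕ) : ℕ :=
  if k < s then s + conjB L β k
  else if k < s + r then s
  else conjA s α (k - (s + r))

lemma Ppart_lt {r s : ℕ} {α : Fin s → ℕ} {β : ℕ → ℕ} {k : ℕ} (h : k < s) :
    Ppart r s α β k = s + α ⟨k, h⟩ := dif_pos h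

lemma Ppart_mid {r s : ℕ} {α : Fin s → ℕ} {β : ℕ → ℕ} {k : ℕ} (h1 : ¬ k < s)
    (h2 : k < s + r) : Ppart r s α β k = s := by
  rw [Ppart, dif_neg h1, if_pos h2]

lemma Ppart_tail {r s : ℕ} {α : Fin s → ℕ} {β : ℕ → ℕ} {k : ℕ} (h : ¬ k < s + r) :
    Ppart r s α β k = β (k - (s + r)) := by
  rw [Ppart, dif_neg (by omega), if_neg h]

lemma Qpart_lt {r s L : ℕ} {α : Fin s → ℕ} {β : ℕ → ℕ} {k : ℕ} (h : k < s) :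
    Qpart r s L α β k = s + conjB L β k := if_pos h

lemma Qpart_mid {r s L : ℕ} {α : Fin s → ℕ} {β : ℕ → ℕ} {k : ℕ} (h1 : ¬ k < s)
    (h2 : k < s + r) : Qpart r s L α β k = s := by
  rw [Qpart, if_neg h1, if_pos h2]

lemma Qpart_tail {r s L : ℕ} {α : Fin s → ℕ} {β : ℕ → ℕ} {k : ℕ} (h : ¬ k < s + r) :
    Qpart r s L α β k = conjA s α (k - (s + r)) := by
  rw [Qpart, if_neg (by omega), if_neg h]

lemma conjA_le (s : ℕ) (α : Fin s → ℕ) (j : ℕ) : conjA s α j ≤ s :=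
  (Finset.card_filter_le _ _).trans (by simp)

lemma conjA_antitone (s : ℕ) (α : Fin s → ℕ) : Antitone (conjA s α) := by
  intro a b hab
  refine Finset.card_le_card fun i hi => ?_
  simp only [Finset.mem_filter] at hi ⊢
  exact ⟨hi.1, lt_of_le_of_lt hab hi.2⟩

lemma conjB_antitone (L : ℕ) (β : ℕ → ℕ) : Antitone (conjB L β) := by
  intro a b hab
  refine Finset.card_le_card fun i hi => ?_
  simp only [Finset.mem_filter] at hi ⊢
  exact ⟨hi.1, lt_of_le_of_lt hab hi.2⟩

lemma sum_conjB (s L : ℕ) (β : ℕ → ℕ) (hβs : ∀ j, β j ≤ s) :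
    ∑ k ∈ Finset.range s, conjB L β k = ∑ j ∈ Finset.range L, β j := by
  simp only [conjB, Finset.card_filter]
  rw [Finset.sum_comm]
  refine Finset.sum_congr rfl fun j _ => ?_
  rw [← Finset.card_filter]
  have : (Finset.range s).filter (fun k => k < β j) = Finset.range (β j) := by
    ext k; simp only [Finset.mem_filter, Finset.mem_range]
    have := hβs j; omega
  rw [this, Finset.card_range]

lemma sum_conjA (s c : ℕ) (α : Fin s → ℕ) (hc : ∀ i, α i ≤ c) :
    ∑ j ∈ Finset.range c, conjA s α j = ∑ i, α i := by
  simp only [conjA, Finset.card_filter]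
  rw [Finset.sum_comm]
  refine Finset.sum_congr rfl fun i _ => ?_
  rw [← Finset.card_filter]
  have : (Finset.range c).filter (fun j => j < α i) = Finset.range (α i) := by
    ext j; simp only [Finset.mem_filter, Finset.mem_range]
    have := hc i; omega
  rw [this, Finset.card_range]

/-- for `α` a partition with at most `s` parts and `β` a partition with
all parts `≤ s` (supported in `[0,L)`), both `P_{r,s}(α,β)` and `Q_{r,s}(α,β)` are
partitions, both have size `s(s+r) + |α| + |β|`, and `(α,β) ↦ (P,Q)` is injective. -/
theorem PQ_partition_size_injective (r s L : ℕ) (hr : 0 < r)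
    (α : Fin s → ℕ) (β : ℕ → ℕ) (hα : Antitone α) (hβ : Antitone β)
    (hβs : ∀ j, β j ≤ s) (hL : ∀ j, L ≤ j → β j = 0) :
    Antitone (Ppart r s α β) ∧
    Antitone (Qpart r s L α β) ∧
    (∀ M : ℕ, s + r + L ≤ M →
      ∑ k ∈ Finset.range M, Ppart r s α β k =
        s * (s + r) + (∑ i, α i) + ∑ j ∈ Finset.range L, β j) ∧
    (∀ c M : ℕ, (∀ i, α i ≤ c) → s + r + c ≤ M →
      ∑ k ∈ Finset.range M, Qpart r s L α β k =
        s * (s + r) + (∑ i, α i) + ∑ j ∈ Finset.range L, β j) ∧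
    (∀ (α' : Fin s → ℕ) (β' : ℕ → ℕ),
      Ppart r s α β = Ppart r s α' β' → Qpart r s L α β = Qpart r s L α' β' →
        α = α' ∧ β = β') := by
  refine ⟨?_, ?_, ?_, ?_, ?_⟩
  · -- Antitone Ppart
    intro a b hab
    by_cases hb : b < s
    · have ha : a < s := lt_of_le_of_lt hab hb
      rw [Ppart_lt hb, Ppart_lt ha]
      exact Nat.add_le_add_left (hα (show (⟨a, ha⟩ : Fin s) ≤ ⟨b, hb⟩ from hab)) s
    · by_cases hb2 : b < s + r
      · rw [Ppart_mid hb hb2]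
        by_cases ha : a < s
        · rw [Ppart_lt ha]; omega
        · rw [Ppart_mid ha (lt_of_le_of_lt hab hb2)]
      · rw [Ppart_tail hb2]
        by_cases ha : a < s
        · rw [Ppart_lt ha]; exact le_trans (hβs _) (by omega)
        · by_cases ha2 : a < s + r
          · rw [Ppart_mid ha ha2]; exact hβs _
          · rw [Ppart_tail ha2]
            exact hβ (by omega)
  · -- Antitone Qpart
    intro a b hab
    by_cases hb : b < s
    · have ha : a < s := lt_of_le_of_lt hab hb
      rw [Qpart_lt hb, Qpart_lt ha]
      exact Nat.add_le_add_left (conjB_antitone L β hab) s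
    · by_cases hb2 : b < s + r
      · rw [Qpart_mid hb hb2]
        by_cases ha : a < s
        · rw [Qpart_lt ha]; omega
        · rw [Qpart_mid ha (lt_of_le_of_lt hab hb2)]
      · rw [Qpart_tail hb2]
        by_cases ha : a < s
        · rw [Qpart_lt ha]; exact le_trans (conjA_le s α _) (by omega)
        · by_cases ha2 : a < s + r
          · rw [Qpart_mid ha ha2]; exact conjA_le s α _
          · rw [Qpart_tail ha2]
            exact conjA_antitone s α (by omega)
  · -- sum of Ppart
    intro M hM
    rw [Finset.range_eq_Ico,
      ← Finset.sum_Ico_consecutive _ (Nat.zero_le (s + r)) (by omega : s + r ≤ M),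
      ← Finset.sum_Ico_consecutive _ (Nat.zero_le s) (by omega : s ≤ s + r)]
    have h1 : ∑ k ∈ Finset.Ico 0 s, Ppart r s α β k = s * s + ∑ i, α i := by
      rw [← Finset.range_eq_Ico]
      have : ∀ k ∈ Finset.range s, Ppart r s α β k =
          s + (if h : k < s then α ⟨k, h⟩ else 0) := by
        intro k hk
        rw [Finset.mem_range] at hk
        rw [Ppart_lt hk, dif_pos hk]
      rw [Finset.sum_congr rfl this, Finset.sum_add_distrib, Finset.sum_const,
        Finset.card_range, smul_eq_mul,
        ← Fin.sum_univ_eq_sum_range (fun k => if h : k < s then α ⟨k, h⟩ else 0) s]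
      congr 1
      exact Finset.sum_congr rfl fun i _ => by simp [i.isLt]
    have h2 : ∑ k ∈ Finset.Ico s (s + r), Ppart r s α β k = r * s := by
      rw [Finset.sum_congr rfl (fun k hk => ?_), Finset.sum_const, Nat.card_Ico,
        smul_eq_mul, Nat.add_sub_cancel_left]
      rw [Finset.mem_Ico] at hk
      exact Ppart_mid (by omega) hk.2
    have h3 : ∑ k ∈ Finset.Ico (s + r) M, Ppart r s α β k = ∑ j ∈ Finset.range L, β j := by
      rw [Finset.sum_congr rfl (fun k hk => Ppart_tail (by
        rw [Finset.mem_Ico] at hk; omega)), Finset.sum_Ico_eq_sum_range]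
      simp only [Nat.add_sub_cancel_left]
      rw [← Finset.sum_subset (Finset.range_subset_range.2 (by omega : L ≤ M - (s + r)))]
      intro j _ hj
      exact hL j (by simpa using hj)
    rw [h1, h2, h3]; ring
  · -- sum of Qpart
    intro c M hc hM
    rw [Finset.range_eq_Ico,
      ← Finset.sum_Ico_consecutive _ (Nat.zero_le (s + r)) (by omega : s + r ≤ M),
      ← Finset.sum_Ico_consecutive _ (Nat.zero_le s) (by omega : s ≤ s + r)]
    have h1 : ∑ k ∈ Finset.Ico 0 s, Qpart r s L α β k = s * s + ∑ j ∈ Finset.range L, β j := by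
      rw [← Finset.range_eq_Ico,
        Finset.sum_congr rfl (fun k hk => Qpart_lt (Finset.mem_range.1 hk)),
        Finset.sum_add_distrib, Finset.sum_const, Finset.card_range, smul_eq_mul,
        sum_conjB s L β hβs]
    have h2 : ∑ k ∈ Finset.Ico s (s + r), Qpart r s L α β k = r * s := by
      rw [Finset.sum_congr rfl (fun k hk => ?_), Finset.sum_const, Nat.card_Ico,
        smul_eq_mul, Nat.add_sub_cancel_left]
      rw [Finset.mem_Ico] at hk
      exact Qpart_mid (by omega) hk.2
    have h3 : ∑ k ∈ Finset.Ico (s + r) M, Qpart r s L α β k = ∑ i, α i := by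
      rw [Finset.sum_congr rfl (fun k hk => Qpart_tail (by
        rw [Finset.mem_Ico] at hk; omega)), Finset.sum_Ico_eq_sum_range]
      simp only [Nat.add_sub_cancel_left]
      exact sum_conjA s (M - (s + r)) α fun i => le_trans (hc i) (by omega)
    rw [h1, h2, h3]; ring
  · -- injectivity
    intro α' β' hP _hQ
    constructor
    · funext i
      have := congrFun hP i.val
      rw [Ppart_lt i.isLt, Ppart_lt i.isLt] at this
      simpa using this
    · funext j
      have := congrFun hP (s + r + j)
      rw [Ppart_tail (by omega), Ppart_tail (by omega)] at this
      simpa using this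
end
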